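/- arXiv:2409.00384 — 4 statements merged into one kernel-verified Lean document; each statement's English description precedes it below -/
import Mathlib

section
/- Let p > 2 be a prime and let a ∈ ℤ_p be a p-adic integer such that a + j is a p-adic unit for every j = 1, 2, ..., p-1. Then Σ_{k=0}^{p-1} (a+1/2)_k^4 / (a+1)_k^4 ≡ (1 / (a+1)_{(p-1)/2}^4) · Σ_{k=0}^{p-1} (1/2)_k^4 / k!^4 (mod p), i.e., the difference of the two sides lies in p ℤ_p. -/
open Finset

/-- The Pochhammer symbol `(x)_k = x(x+1)···(x+k-1)` in a commutative ring. -/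
def poch {R : Type*} [CommRing R] (x : R) (k : ℕ) : R :=
  ∏ j ∈ Finset.range k, (x + (j : R))

lemma poch_succ {R : Type*} [CommRing R] (x : R) (k : ℕ) :
    poch x (k + 1) = poch x k * (x + k) := Finset.prod_range_succ _ _

lemma poch_one {R : Type*} [CommRing R] (k : ℕ) : poch (1 : R) k = (k.factorial : R) := by
  induction k with
  | zero => simp [poch]
  | succ n ih =>
    rw [poch_succ, ih, Nat.factorial_succ]
    push_cast
    ring

/-- Wilson-type fact: `(((p-1)/2)!)^4 = 1` in `ZMod p` for an odd prime. -/
lemma halfFacPow4 (p : ℕ) [hp : Fact p.Prime] (hp2 : 2 < p) :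
    ((((p - 1) / 2).factorial : ZMod p)) ^ 4 = 1 := by
  have hodd : p % 2 = 1 := Nat.odd_iff.mp (hp.1.odd_of_ne_two (by omega))
  set m := (p - 1) / 2 with hm
  have h2m : m + m = p - 1 := by omega
  have hfac : ∀ n : ℕ, ((n.factorial : ZMod p)) = ∏ i ∈ range n, ((i : ZMod p) + 1) := by
    intro n
    rw [← Finset.prod_range_add_one_eq_factorial, Nat.cast_prod]
    exact Finset.prod_congr rfl fun i _ => by push_cast; ring
  have key : ((p - 1).factorial : ZMod p) = (-1) ^ m * (m.factorial : ZMod p) ^ 2 := by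
    rw [hfac, ← h2m, Finset.prod_range_add]
    have h2 : ∀ i ∈ range m, ((m + i : ℕ) : ZMod p) + 1 = -(((m - i : ℕ) : ZMod p)) := by
      intro i hi
      rw [Finset.mem_range] at hi
      have hsum : ((m + i) + 1) + (m - i) = p := by omega
      have : (((m + i) + 1 : ℕ) : ZMod p) + ((m - i : ℕ) : ZMod p) = 0 := by
        rw [← Nat.cast_add, hsum, ZMod.natCast_self]
      push_cast at this ⊢
      linear_combination this
    rw [Finset.prod_congr rfl h2]
    have h3 : ∏ i ∈ range m, (-(((m - i : ℕ) : ZMod p))) =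
        (-1) ^ m * ∏ i ∈ range m, ((m - i : ℕ) : ZMod p) := by
      have : ∀ i ∈ range m, -(((m - i : ℕ) : ZMod p)) = (-1) * ((m - i : ℕ) : ZMod p) :=
        fun i _ => by ring
      rw [Finset.prod_congr rfl this, Finset.prod_mul_distrib, Finset.prod_const,
        Finset.card_range]
    rw [h3]
    have h4 : ∏ i ∈ range m, ((m - i : ℕ) : ZMod p) = (m.factorial : ZMod p) := by
      rw [← Nat.cast_prod, ← Finset.prod_range_add_one_eq_factorial m]
      congr 1
      rw [← Finset.prod_range_reflect (fun j => j + 1) m]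
      exact Finset.prod_congr rfl fun i hi => by
        rw [Finset.mem_range] at hi; omega
    rw [h4, hfac]
    ring
  have hw : ((p - 1).factorial : ZMod p) = -1 := ZMod.wilsons_lemma p
  have hsq : ((-1 : ZMod p) ^ m * (m.factorial : ZMod p) ^ 2) ^ 2 = 1 := by
    rw [← key, hw]; ring
  have hpow : ((-1 : ZMod p) ^ m) ^ 2 = 1 := by
    rw [← pow_mul, mul_comm, pow_mul]; simp
  calc ((m.factorial : ZMod p)) ^ 4
      = ((-1 : ZMod p) ^ m) ^ 2 * (m.factorial : ZMod p) ^ 4 := by rw [hpow, one_mul]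
    _ = ((-1 : ZMod p) ^ m * (m.factorial : ZMod p) ^ 2) ^ 2 := by ring
    _ = 1 := hsq

section Padic
variable {p : ℕ} [hp : Fact p.Prime]

lemma key_mul {x y z w : ℚ_[p]} {δ : ℝ} (hx : ‖x‖ ≤ 1) (hw : ‖w‖ ≤ 1)
    (h1 : ‖x - z‖ ≤ δ) (h2 : ‖y - w‖ ≤ δ) : ‖x * y - z * w‖ ≤ δ := by
  have hδ : 0 ≤ δ := le_trans (norm_nonneg _) h1
  have e : x * y - z * w = x * (y - w) + (x - z) * w := by ring
  rw [e]
  refine (IsUltrametricDist.norm_add_le_max _ _).trans (max_le ?_ ?_)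
  · rw [norm_mul]
    calc ‖x‖ * ‖y - w‖ ≤ 1 * δ := mul_le_mul hx h2 (norm_nonneg _) zero_le_one
      _ = δ := one_mul δ
  · rw [norm_mul]
    calc ‖x - z‖ * ‖w‖ ≤ δ * 1 := mul_le_mul h1 hw (norm_nonneg _) hδ
      _ = δ := mul_one δ

lemma key_pow4 {x z : ℚ_[p]} {δ : ℝ} (hx : ‖x‖ ≤ 1) (hz : ‖z‖ ≤ 1)
    (h : ‖x - z‖ ≤ δ) : ‖x ^ 4 - z ^ 4‖ ≤ δ := by
  have h2 : ‖x ^ 2 - z ^ 2‖ ≤ δ := by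
    rw [pow_two, pow_two]; exact key_mul hx hz h h
  have hx2 : ‖x ^ 2‖ ≤ 1 := by
    rw [norm_pow]; exact pow_le_one₀ (norm_nonneg _) hx
  have hz2 : ‖z ^ 2‖ ≤ 1 := by
    rw [norm_pow]; exact pow_le_one₀ (norm_nonneg _) hz
  have h4 := key_mul hx2 hz2 h2 h2
  have e : x ^ 4 - z ^ 4 = x ^ 2 * x ^ 2 - z ^ 2 * z ^ 2 := by ring
  rwa [e]

lemma norm_prod_sub_prod_le {ι : Type*} (s : Finset ι) (f g : ι → ℚ_[p]) {δ : ℝ} (hδ : 0 ≤ δ)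
    (hf : ∀ i ∈ s, ‖f i‖ ≤ 1) (hg : ∀ i ∈ s, ‖g i‖ ≤ 1)
    (hfg : ∀ i ∈ s, ‖f i - g i‖ ≤ δ) :
    ‖∏ i ∈ s, f i - ∏ i ∈ s, g i‖ ≤ δ := by
  induction s using Finset.cons_induction with
  | empty => simpa using hδ
  | cons a s hns ih =>
    rw [Finset.prod_cons, Finset.prod_cons]
    have hgs : ‖∏ i ∈ s, g i‖ ≤ 1 := by
      rw [norm_prod]
      exact Finset.prod_le_one (fun i _ => norm_nonneg _)
        (fun i hi => hg i (Finset.mem_cons_of_mem hi))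
    exact key_mul (hf a (Finset.mem_cons_self a s)) hgs
      (hfg a (Finset.mem_cons_self a s))
      (ih (fun i hi => hf i (Finset.mem_cons_of_mem hi))
          (fun i hi => hg i (Finset.mem_cons_of_mem hi))
          (fun i hi => hfg i (Finset.mem_cons_of_mem hi)))

lemma norm_natCast_le_one (n : ℕ) : ‖(n : ℚ_[p])‖ ≤ 1 := by
  have := Padic.norm_int_le_one (p := p) (n : ℤ)
  push_cast at this
  exact this

lemma norm_poch_le {x : ℚ_[p]} (hx : ‖x‖ ≤ 1) (k : ℕ) : ‖poch x k‖ ≤ 1 := by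
  rw [poch, norm_prod]
  refine Finset.prod_le_one (fun i _ => norm_nonneg _) fun i _ => ?_
  exact (IsUltrametricDist.norm_add_le_max _ _).trans (max_le hx (norm_natCast_le_one i))

lemma norm_poch_sub_poch_le {x α : ℚ_[p]} (hx : ‖x‖ ≤ 1) (hα : ‖α‖ ≤ (p : ℝ)⁻¹) (k : ℕ) :
    ‖poch (α + x) k - poch x k‖ ≤ (p : ℝ)⁻¹ := by
  have hδ : (0 : ℝ) ≤ (p : ℝ)⁻¹ := by positivity
  have hδ1 : (p : ℝ)⁻¹ ≤ 1 := by
    rw [inv_le_one_iff₀]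
    right
    exact_mod_cast hp.1.one_lt.le
  rw [poch, poch]
  refine norm_prod_sub_prod_le _ _ _ hδ ?_ ?_ ?_
  · intro i _
    refine (IsUltrametricDist.norm_add_le_max _ _).trans (max_le ?_ (norm_natCast_le_one i))
    exact (IsUltrametricDist.norm_add_le_max _ _).trans (max_le (hα.trans hδ1) hx)
  · intro i _
    exact (IsUltrametricDist.norm_add_le_max _ _).trans (max_le hx (norm_natCast_le_one i))
  · intro i _
    have e : (α + x + (i : ℚ_[p])) - (x + (i : ℚ_[p])) = α := by ring
    rwa [e]

end Padic

/-- For an odd prime `p` and a `p`-adic integer `a` with `a + j` a `p`-adic unit for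
`j = 1, …, p-1`, one has
`Σ_{k=0}^{p-1} (a+1/2)_k^4/(a+1)_k^4 ≡ (a+1)_{(p-1)/2}^{-4} · Σ_{k=0}^{p-1} (1/2)_k^4/k!^4`
modulo `p`, i.e. the difference of the two sides (elements of `ℚ_p` that in fact lie
in `ℤ_p`) belongs to `p ℤ_p`. -/
theorem padic_sum_congr (p : ℕ) [hp : Fact p.Prime] (hp2 : 2 < p) (a : ℤ_[p])
    (ha : ∀ j ∈ Finset.Icc 1 (p - 1), IsUnit (a + (j : ℤ_[p]))) :
    ∃ y : ℤ_[p],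
      (∑ k ∈ Finset.range p,
          poch ((a : ℚ_[p]) + 1 / 2) k ^ 4 / poch ((a : ℚ_[p]) + 1) k ^ 4)
        - (1 / poch ((a : ℚ_[p]) + 1) ((p - 1) / 2) ^ 4) *
            (∑ k ∈ Finset.range p,
              poch ((1 : ℚ_[p]) / 2) k ^ 4 / (k.factorial : ℚ_[p]) ^ 4)
      = (p : ℚ_[p]) * (y : ℚ_[p]) := by
  have hprime := hp.1
  have hppos : (0 : ℝ) < p := by exact_mod_cast hprime.pos
  have hδ0 : (0 : ℝ) ≤ (p : ℝ)⁻¹ := by positivity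
  have hδ1 : (p : ℝ)⁻¹ ≤ 1 := by
    rw [inv_le_one_iff₀]; right; exact_mod_cast hprime.one_lt.le
  set α : ℚ_[p] := (a : ℚ_[p]) with hαdef
  -- `a ≡ 0 mod p`
  have haz : PadicInt.toZMod a = 0 := by
    by_contra hz
    set v := (PadicInt.toZMod a).val with hv
    have hvlt : v < p := ZMod.val_lt _
    have hv1 : 1 ≤ v := by
      rcases Nat.eq_zero_or_pos v with h0 | h
      · exact absurd ((ZMod.val_eq_zero _).mp h0) hz
      · exact h
    have hj : p - v ∈ Finset.Icc 1 (p - 1) := by rw [Finset.mem_Icc]; omega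
    have hu := (ha _ hj).map (PadicInt.toZMod (p := p))
    rw [map_add, map_natCast] at hu
    have hcast : ((p - v : ℕ) : ZMod p) = -(PadicInt.toZMod a) := by
      rw [Nat.cast_sub hvlt.le, ZMod.natCast_self, hv,
        ZMod.natCast_rightInverse (PadicInt.toZMod a), zero_sub]
    rw [hcast, add_neg_cancel] at hu
    exact hu.ne_zero rfl
  have hdvd : (p : ℤ_[p]) ∣ a := by
    have hker : a ∈ RingHom.ker (PadicInt.toZMod (p := p)) := by
      rw [RingHom.mem_ker]; exact haz
    rwa [PadicInt.ker_toZMod, PadicInt.maximalIdeal_eq_span_p,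
      Ideal.mem_span_singleton] at hker
  have hα : ‖α‖ ≤ (p : ℝ)⁻¹ := by
    rw [hαdef, PadicInt.padic_norm_e_of_padicInt]
    have h1 : ‖a‖ < 1 := (PadicInt.norm_lt_one_iff_dvd a).mpr hdvd
    have h2 := (PadicInt.norm_le_pow_iff_norm_lt_pow_add_one a (-1)).mpr (by simpa using h1)
    simpa using h2
  have hα1 : ‖α‖ ≤ 1 := hα.trans hδ1
  -- norm facts
  have hhalf : ‖(1 / 2 : ℚ_[p])‖ ≤ 1 := by
    have hle := Padic.norm_int_le_one (p := p) 2
    have hnd : ¬ ((p : ℤ) ∣ 2) := by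
      intro h
      have := Int.le_of_dvd (by norm_num) h
      omega
    have hnlt : ¬ (‖((2 : ℤ) : ℚ_[p])‖ < 1) :=
      fun h => hnd ((Padic.norm_intCast_lt_one_iff (k := 2)).mp h)
    have h2 : ‖((2 : ℤ) : ℚ_[p])‖ = 1 := le_antisymm hle (not_lt.mp hnlt)
    have h2' : ‖(2 : ℚ_[p])‖ = 1 := by
      have : ((2 : ℤ) : ℚ_[p]) = (2 : ℚ_[p]) := by push_cast; ring
      rwa [this] at h2
    rw [norm_div, norm_one, h2', div_one]
  have hah : ‖α + 1 / 2‖ ≤ 1 :=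
    (IsUltrametricDist.norm_add_le_max _ _).trans (max_le hα1 hhalf)
  have hαone : ‖α + 1‖ ≤ 1 :=
    (IsUltrametricDist.norm_add_le_max _ _).trans (max_le hα1 norm_one.le)
  have hBnorm : ∀ k, k ≤ p - 1 → ‖poch (α + 1) k‖ = 1 := by
    intro k hk
    rw [poch, norm_prod]
    have hfac : ∀ j ∈ range k, ‖α + 1 + (j : ℚ_[p])‖ = 1 := by
      intro j hj
      rw [Finset.mem_range] at hj
      have hmem : j + 1 ∈ Finset.Icc 1 (p - 1) := by rw [Finset.mem_Icc]; omega
      have hnu : ‖a + ((j + 1 : ℕ) : ℤ_[p])‖ = 1 := PadicInt.isUnit_iff.mp (ha (j + 1) hmem)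
      have hc : α + 1 + (j : ℚ_[p]) = ((a + ((j + 1 : ℕ) : ℤ_[p]) : ℤ_[p]) : ℚ_[p]) := by
        push_cast [hαdef]; ring
      rw [hc, PadicInt.padic_norm_e_of_padicInt, hnu]
    rw [Finset.prod_congr rfl hfac, Finset.prod_const_one]
  have hDnorm : ∀ k, k ≤ p - 1 → ‖((k.factorial : ℚ_[p]))‖ = 1 := by
    intro k hk
    have hnd : ¬ ((p : ℤ) ∣ (k.factorial : ℤ)) := by
      rw [Int.natCast_dvd_natCast]
      intro h
      have := (Nat.Prime.dvd_factorial hprime).mp h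
      omega
    have hle := Padic.norm_int_le_one (p := p) (k.factorial : ℤ)
    have hnlt : ¬ (‖((k.factorial : ℤ) : ℚ_[p])‖ < 1) :=
      fun h => hnd (Padic.norm_intCast_lt_one_iff.mp h)
    have h1 : ‖((k.factorial : ℤ) : ℚ_[p])‖ = 1 := le_antisymm hle (not_lt.mp hnlt)
    rwa [Int.cast_natCast] at h1
  have hAN : ∀ k, ‖poch (α + 1 / 2) k - poch (1 / 2 : ℚ_[p]) k‖ ≤ (p : ℝ)⁻¹ :=
    fun k => norm_poch_sub_poch_le hhalf hα k
  have hBD : ∀ k, ‖poch (α + 1) k - (k.factorial : ℚ_[p])‖ ≤ (p : ℝ)⁻¹ := by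
    intro k
    rw [← poch_one k]
    exact norm_poch_sub_poch_le norm_one.le hα k
  -- termwise bound
  have hterm : ∀ k, k ≤ p - 1 →
      ‖poch (α + 1 / 2) k ^ 4 / poch (α + 1) k ^ 4
        - poch ((1 : ℚ_[p]) / 2) k ^ 4 / (k.factorial : ℚ_[p]) ^ 4‖ ≤ (p : ℝ)⁻¹ := by
    intro k hk
    have hB1 : ‖poch (α + 1) k‖ = 1 := hBnorm k hk
    have hD1 : ‖(k.factorial : ℚ_[p])‖ = 1 := hDnorm k hk
    have hB0 : poch (α + 1) k ≠ 0 := by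
      intro h; rw [h, norm_zero] at hB1; norm_num at hB1
    have hD0 : (k.factorial : ℚ_[p]) ≠ 0 := by
      intro h; rw [h, norm_zero] at hD1; norm_num at hD1
    have hA1 : ‖poch (α + 1 / 2) k‖ ≤ 1 := norm_poch_le hah k
    have hN1 : ‖poch ((1 : ℚ_[p]) / 2) k‖ ≤ 1 := norm_poch_le hhalf k
    have e : poch (α + 1 / 2) k ^ 4 / poch (α + 1) k ^ 4
        - poch ((1 : ℚ_[p]) / 2) k ^ 4 / (k.factorial : ℚ_[p]) ^ 4
        = (poch (α + 1 / 2) k ^ 4 * (k.factorial : ℚ_[p]) ^ 4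
            - poch ((1 : ℚ_[p]) / 2) k ^ 4 * poch (α + 1) k ^ 4)
          / (poch (α + 1) k ^ 4 * (k.factorial : ℚ_[p]) ^ 4) := by
      field_simp
    rw [e, norm_div, norm_mul, norm_pow, norm_pow, hB1, hD1]
    simp only [one_pow, mul_one, div_one]
    have hx4 : ‖poch (α + 1 / 2) k ^ 4‖ ≤ 1 := by
      rw [norm_pow]; exact pow_le_one₀ (norm_nonneg _) hA1
    have hw4 : ‖poch (α + 1) k ^ 4‖ ≤ 1 := by
      rw [norm_pow, hB1]; norm_num
    have h1 := key_pow4 hA1 hN1 (hAN k)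
    have h2 : ‖(k.factorial : ℚ_[p]) ^ 4 - poch (α + 1) k ^ 4‖ ≤ (p : ℝ)⁻¹ :=
      key_pow4 hD1.le hB1.le (by rw [norm_sub_rev]; exact hBD k)
    exact key_mul hx4 hw4 h1 h2
  -- bound on each RHS-sum term
  have hs1 : ∀ k, k ≤ p - 1 →
      ‖poch ((1 : ℚ_[p]) / 2) k ^ 4 / (k.factorial : ℚ_[p]) ^ 4‖ ≤ 1 := by
    intro k hk
    rw [norm_div, norm_pow, norm_pow, hDnorm k hk, one_pow, div_one]
    exact pow_le_one₀ (norm_nonneg _) (norm_poch_le hhalf k)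
  -- the constant factor
  have hmle : (p - 1) / 2 ≤ p - 1 := Nat.div_le_self _ _
  have hBm : ‖poch (α + 1) ((p - 1) / 2)‖ = 1 := hBnorm _ hmle
  have hBm0 : poch (α + 1) ((p - 1) / 2) ≠ 0 := by
    intro h; rw [h, norm_zero] at hBm; norm_num at hBm
  have hFm : ‖((((p - 1) / 2).factorial : ℚ_[p]))‖ = 1 := hDnorm _ hmle
  have hwil : ‖((((p - 1) / 2).factorial : ℚ_[p])) ^ 4 - 1‖ ≤ (p : ℝ)⁻¹ := by
    have hz : ((((((p - 1) / 2).factorial : ℤ)) ^ 4 - 1 : ℤ) : ZMod p) = 0 := by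
      push_cast
      rw [halfFacPow4 p hp2]
      ring
    have hdvd2 : ((p : ℤ) ^ 1) ∣ (((((p - 1) / 2).factorial : ℤ)) ^ 4 - 1) := by
      rw [pow_one]
      exact (ZMod.intCast_zmod_eq_zero_iff_dvd _ p).mp hz
    have h3 := (Padic.norm_int_le_pow_iff_dvd (p := p) _ 1).mpr hdvd2
    push_cast at h3
    simpa using h3
  have hcb : ‖1 - 1 / poch (α + 1) ((p - 1) / 2) ^ 4‖ ≤ (p : ℝ)⁻¹ := by
    have e : 1 - 1 / poch (α + 1) ((p - 1) / 2) ^ 4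
        = (poch (α + 1) ((p - 1) / 2) ^ 4 - 1) / poch (α + 1) ((p - 1) / 2) ^ 4 := by
      field_simp
    rw [e, norm_div, norm_pow, hBm, one_pow, div_one]
    have e2 : poch (α + 1) ((p - 1) / 2) ^ 4 - 1
        = (poch (α + 1) ((p - 1) / 2) ^ 4 - ((((p - 1) / 2).factorial : ℚ_[p])) ^ 4)
          + (((((p - 1) / 2).factorial : ℚ_[p])) ^ 4 - 1) := by ring
    rw [e2]
    refine (IsUltrametricDist.norm_add_le_max _ _).trans (max_le ?_ hwil)
    exact key_pow4 (norm_poch_le hαone _) hFm.le (hBD _)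
  -- assemble
  set X : ℚ_[p] :=
    (∑ k ∈ Finset.range p,
        poch (α + 1 / 2) k ^ 4 / poch (α + 1) k ^ 4)
      - (1 / poch (α + 1) ((p - 1) / 2) ^ 4) *
          (∑ k ∈ Finset.range p,
            poch ((1 : ℚ_[p]) / 2) k ^ 4 / (k.factorial : ℚ_[p]) ^ 4) with hXdef
  have hX : ‖X‖ ≤ (p : ℝ)⁻¹ := by
    have split : X = (∑ k ∈ Finset.range p,
          (poch (α + 1 / 2) k ^ 4 / poch (α + 1) k ^ 4
            - poch ((1 : ℚ_[p]) / 2) k ^ 4 / (k.factorial : ℚ_[p]) ^ 4))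
        + (1 - 1 / poch (α + 1) ((p - 1) / 2) ^ 4) *
            (∑ k ∈ Finset.range p,
              poch ((1 : ℚ_[p]) / 2) k ^ 4 / (k.factorial : ℚ_[p]) ^ 4) := by
      rw [hXdef, Finset.sum_sub_distrib]
      ring
    rw [split]
    refine (IsUltrametricDist.norm_add_le_max _ _).trans (max_le ?_ ?_)
    · refine IsUltrametricDist.norm_sum_le_of_forall_le_of_nonneg hδ0 ?_
      intro k hk
      rw [Finset.mem_range] at hk
      exact hterm k (by omega)
    · rw [norm_mul]
      have hsum1 : ‖∑ k ∈ Finset.range p,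
          poch ((1 : ℚ_[p]) / 2) k ^ 4 / (k.factorial : ℚ_[p]) ^ 4‖ ≤ 1 := by
        refine IsUltrametricDist.norm_sum_le_of_forall_le_of_nonneg zero_le_one ?_
        intro k hk
        rw [Finset.mem_range] at hk
        exact hs1 k (by omega)
      calc ‖1 - 1 / poch (α + 1) ((p - 1) / 2) ^ 4‖ * ‖∑ k ∈ Finset.range p,
            poch ((1 : ℚ_[p]) / 2) k ^ 4 / (k.factorial : ℚ_[p]) ^ 4‖
          ≤ (p : ℝ)⁻¹ * 1 := mul_le_mul hcb hsum1 (norm_nonneg _) hδ0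
        _ = (p : ℝ)⁻¹ := mul_one _
  have hpne : (p : ℚ_[p]) ≠ 0 := Nat.cast_ne_zero.mpr hprime.ne_zero
  refine ⟨⟨X / (p : ℚ_[p]), ?_⟩, ?_⟩
  · have : ‖X / (p : ℚ_[p])‖ = ‖X‖ / (p : ℝ)⁻¹ := by
      rw [norm_div, Padic.norm_p]
    rw [this]
    rw [div_le_one (by positivity)]
    exact hX
  · show X = (p : ℚ_[p]) * (X / (p : ℚ_[p]))
    rw [mul_comm, div_mul_cancel₀ _ hpne]
end

section
/- Let p > 2 be a prime and let a ∈ ℤ_p be a p-adic integer such that a + j is a p-adic unit for every j = 1, 2, ..., p-1. Then Σ_{k=0}^{p-1} (a+(p+1)/2)_k^2 (a+(−p+1)/2)_k^2 / (a+1)_k^4 ≡ ((p-1)!^2 / (a+1)_{(p-1)/2}^4) · Σ_{k=0}^{p-1} ((p+1)/2)_k^2 ((−p+1)/2)_k^2 / k!^4 (mod p), i.e., the difference of the two sides lies in p ℤ_p. -/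
open Finset

lemma poch_map {R S : Type*} [CommRing R] [CommRing S] (f : R →+* S) (x : R) (k : ℕ) :
    f (poch x k) = poch (f x) k := by
  simp only [poch, map_prod, map_add, map_natCast]

lemma poch_one_eq_factorial {R : Type*} [CommRing R] (k : ℕ) :
    poch (1 : R) k = k.factorial := by
  induction k with
  | zero => simp [poch]
  | succ n ih =>
    rw [poch, Finset.prod_range_succ, ← poch, ih, Nat.factorial_succ]
    push_cast
    ring

lemma poch_coe {p : ℕ} [Fact p.Prime] (x : ℤ_[p]) (k : ℕ) :
    ((poch x k : ℤ_[p]) : ℚ_[p]) = poch (x : ℚ_[p]) k :=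
  poch_map (PadicInt.Coe.ringHom) x k

lemma isUnit_toZMod_iff {p : ℕ} [Fact p.Prime] (x : ℤ_[p]) :
    IsUnit x ↔ PadicInt.toZMod x ≠ 0 := by
  have h : PadicInt.toZMod x = 0 ↔ ¬ IsUnit x := by
    rw [← RingHom.mem_ker, PadicInt.ker_toZMod]
    exact (IsLocalRing.mem_maximalIdeal x).trans mem_nonunits_iff
  rw [Ne, h, not_not]

lemma half_factorial_pow_four {p : ℕ} [hp : Fact p.Prime] (hp2 : 2 < p) :
    ((((p - 1) / 2).factorial : ZMod p)) ^ 4 = 1 := by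
  have hp1 := hp.out
  obtain ⟨t, ht⟩ := hp1.odd_of_ne_two (by omega)
  set m := (p - 1) / 2 with hmdef
  have hpm : p = 2 * m + 1 := by omega
  set s : ZMod p := (m.factorial : ZMod p) with hs
  -- (p-1)! ≡ m! * (-1)^m * m!
  have key : (((p - 1).factorial : ℕ) : ZMod p) = s * ((-1) ^ m * s) := by
    have h1 : p - 1 = m + m := by omega
    have h2 : (((p - 1).factorial : ℕ) : ZMod p)
        = ∏ j ∈ Finset.range (m + m), ((j + 1 : ℕ) : ZMod p) := by
      rw [← Finset.prod_range_add_one_eq_factorial (p - 1), Nat.cast_prod, h1]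
    rw [h2, Finset.prod_range_add]
    have hfirst : (∏ j ∈ Finset.range m, ((j + 1 : ℕ) : ZMod p)) = s := by
      rw [hs, ← Finset.prod_range_add_one_eq_factorial m, Nat.cast_prod]
    have hsecond : (∏ j ∈ Finset.range m, ((m + j + 1 : ℕ) : ZMod p))
        = (-1) ^ m * s := by
      have hc : ∀ j ∈ Finset.range m,
          ((m + j + 1 : ℕ) : ZMod p) = -(((m - j : ℕ) : ZMod p)) := by
        intro j hj
        rw [Finset.mem_range] at hj
        have hsum : (m + j + 1) + (m - j) = p := by omega
        have h0 : ((m + j + 1 : ℕ) : ZMod p) + ((m - j : ℕ) : ZMod p) = 0 := by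
          rw [← Nat.cast_add, hsum, ZMod.natCast_self]
        linear_combination h0
      rw [Finset.prod_congr rfl hc]
      have hrefl : (∏ j ∈ Finset.range m, ((m - j : ℕ) : ZMod p)) = s := by
        have hn : (∏ j ∈ Finset.range m, (m - j)) = m.factorial := by
          rw [← Finset.prod_range_add_one_eq_factorial m,
            ← Finset.prod_range_reflect (fun j => j + 1) m]
          exact Finset.prod_congr rfl fun j hj => by
            rw [Finset.mem_range] at hj; omega
        rw [hs, ← hn, Nat.cast_prod]
      calc (∏ j ∈ Finset.range m, -(((m - j : ℕ) : ZMod p)))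
          = ∏ j ∈ Finset.range m, ((-1 : ZMod p) * ((m - j : ℕ) : ZMod p)) := by
            simp [neg_one_mul]
        _ = (-1) ^ m * s := by
            rw [Finset.prod_mul_distrib, Finset.prod_const, Finset.card_range, hrefl]
    rw [hfirst, hsecond]
  have hw : s * ((-1) ^ m * s) = -1 := by
    rw [← key, ZMod.wilsons_lemma]
  -- hence s^2 * (-1)^m = -1 and s^4 = 1
  have h2 : s ^ 2 * (-1 : ZMod p) ^ m = -1 := by linear_combination hw
  have hsgn : ((-1 : ZMod p) ^ m) ^ 2 = 1 := by
    rw [← pow_mul, mul_comm, pow_mul]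
    norm_num
  have h4 : s ^ 4 = (s ^ 2 * (-1 : ZMod p) ^ m) ^ 2 := by
    rw [mul_pow, hsgn, mul_one, ← pow_mul]
  rw [h4, h2]
  norm_num

/-- For an odd prime `p` and a `p`-adic integer `a` with `a + j` a `p`-adic unit for
`j = 1, …, p-1`, one has
`Σ_{k=0}^{p-1} (a+(p+1)/2)_k^2 (a+(−p+1)/2)_k^2 / (a+1)_k^4
  ≡ ((p-1)!^2/(a+1)_{(p-1)/2}^4) · Σ_{k=0}^{p-1} ((p+1)/2)_k^2 ((−p+1)/2)_k^2 / k!^4`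
modulo `p`, i.e. the difference of the two sides lies in `p ℤ_p`.  Here
`(p+1)/2` is the integer `(p+1)/2` and `(−p+1)/2 = −((p-1)/2)`. -/
theorem padic_sum_congr_shifted (p : ℕ) [hp : Fact p.Prime] (hp2 : 2 < p) (a : ℤ_[p])
    (ha : ∀ j ∈ Finset.Icc 1 (p - 1), IsUnit (a + (j : ℤ_[p]))) :
    ∃ y : ℤ_[p],
      (∑ k ∈ Finset.range p,
          poch ((a : ℚ_[p]) + (((p + 1) / 2 : ℕ) : ℚ_[p])) k ^ 2 *
            poch ((a : ℚ_[p]) - (((p - 1) / 2 : ℕ) : ℚ_[p])) k ^ 2 /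
          poch ((a : ℚ_[p]) + 1) k ^ 4)
        - (((p - 1).factorial : ℚ_[p]) ^ 2 / poch ((a : ℚ_[p]) + 1) ((p - 1) / 2) ^ 4) *
            (∑ k ∈ Finset.range p,
              poch ((((p + 1) / 2 : ℕ) : ℚ_[p])) k ^ 2 *
                poch (-(((p - 1) / 2 : ℕ) : ℚ_[p])) k ^ 2 /
              (k.factorial : ℚ_[p]) ^ 4)
      = (p : ℚ_[p]) * (y : ℚ_[p]) := by
  have hp1 := hp.out
  -- a is divisible by p
  have ha0 : PadicInt.toZMod a = 0 := by
    by_contra h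
    have hval : (PadicInt.toZMod a).val ≠ 0 := by
      intro h0
      exact h ((ZMod.val_eq_zero _).mp h0)
    have hvlt : (PadicInt.toZMod a).val < p := ZMod.val_lt _
    have hmem : p - (PadicInt.toZMod a).val ∈ Finset.Icc 1 (p - 1) := by
      rw [Finset.mem_Icc]; omega
    have hu := ha _ hmem
    rw [isUnit_toZMod_iff] at hu
    apply hu
    rw [map_add, map_natCast]
    have h0 : (((p - (PadicInt.toZMod a).val) + (PadicInt.toZMod a).val : ℕ) : ZMod p) = 0 := by
      have : (p - (PadicInt.toZMod a).val) + (PadicInt.toZMod a).val = p := by omega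
      rw [this, ZMod.natCast_self]
    push_cast at h0
    rw [ZMod.natCast_val, ZMod.cast_id] at h0
    linear_combination h0
  -- units
  have hpochunit : ∀ k, k ≤ p - 1 → IsUnit (poch (a + 1) k) := by
    intro k hk
    have hterm : ∀ j ∈ Finset.range k, IsUnit (a + 1 + (j : ℤ_[p])) := by
      intro j hj
      rw [Finset.mem_range] at hj
      have h2 : a + ((j + 1 : ℕ) : ℤ_[p]) = a + 1 + (j : ℤ_[p]) := by push_cast; ring
      rw [← h2]
      exact ha (j + 1) (by rw [Finset.mem_Icc]; omega)
    exact Finset.prod_induction _ IsUnit (fun _ _ => IsUnit.mul) isUnit_one hterm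
  have hfacunit : ∀ k, k < p → IsUnit ((k.factorial : ℤ_[p])) := by
    intro k hk
    rw [isUnit_toZMod_iff, map_natCast, Ne, ZMod.natCast_eq_zero_iff]
    intro hdvd
    have := (Nat.Prime.dvd_factorial hp1).mp hdvd
    omega
  have hhalf : ((((p - 1) / 2).factorial : ZMod p)) ^ 4 = 1 := half_factorial_pow_four hp2
  -- per-term congruence
  have key : ∀ k : ℕ, ∃ z : ℤ_[p], k < p →
      poch ((a : ℚ_[p]) + (((p + 1) / 2 : ℕ) : ℚ_[p])) k ^ 2 *
            poch ((a : ℚ_[p]) - (((p - 1) / 2 : ℕ) : ℚ_[p])) k ^ 2 /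
          poch ((a : ℚ_[p]) + 1) k ^ 4
        - (((p - 1).factorial : ℚ_[p]) ^ 2 / poch ((a : ℚ_[p]) + 1) ((p - 1) / 2) ^ 4) *
            (poch ((((p + 1) / 2 : ℕ) : ℚ_[p])) k ^ 2 *
              poch (-(((p - 1) / 2 : ℕ) : ℚ_[p])) k ^ 2 /
            (k.factorial : ℚ_[p]) ^ 4)
      = (p : ℚ_[p]) * (z : ℚ_[p]) := by
    intro k
    by_cases hk : k < p
    swap
    · exact ⟨0, fun h => absurd h hk⟩
    have hBu : IsUnit (poch (a + 1) k ^ 4) := (hpochunit k (by omega)).pow 4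
    have hDu : IsUnit ((k.factorial : ℤ_[p]) ^ 4) := (hfacunit k hk).pow 4
    have hFu : IsUnit (poch (a + 1) ((p - 1) / 2) ^ 4) :=
      (hpochunit _ (by omega)).pow 4
    -- the integral numerator
    set N : ℤ_[p] :=
      (poch (a + ((p + 1) / 2 : ℕ)) k ^ 2 * poch (a - ((p - 1) / 2 : ℕ)) k ^ 2) *
          (poch (a + 1) ((p - 1) / 2) ^ 4) * ((k.factorial : ℤ_[p]) ^ 4)
        - (poch ((((p + 1) / 2 : ℕ)) : ℤ_[p]) k ^ 2 * poch (-(((p - 1) / 2 : ℕ) : ℤ_[p])) k ^ 2) *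
            (((p - 1).factorial : ℤ_[p]) ^ 2) * (poch (a + 1) k ^ 4) with hNdef
    have hN0 : PadicInt.toZMod N = 0 := by
      rw [hNdef]
      simp only [map_sub, map_mul, map_pow, poch_map, map_add, map_natCast, map_neg, map_one,
        ha0, zero_add, zero_sub]
      rw [poch_one_eq_factorial, poch_one_eq_factorial, ZMod.wilsons_lemma, hhalf]
      ring
    have hdvd : (p : ℤ_[p]) ∣ N := by
      have hmem : N ∈ RingHom.ker (PadicInt.toZMod (p := p)) := RingHom.mem_ker.mpr hN0
      rw [PadicInt.ker_toZMod, PadicInt.maximalIdeal_eq_span_p,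
        Ideal.mem_span_singleton] at hmem
      exact hmem
    obtain ⟨w, hw⟩ := hdvd
    set u : ℤ_[p]ˣ := hBu.unit * hFu.unit * hDu.unit with hudef
    refine ⟨w * ↑u⁻¹, fun _ => ?_⟩
    -- rewrite the ℚ_p-level poch's as coercions from ℤ_p
    have e1 : ((a : ℚ_[p]) + (((p + 1) / 2 : ℕ) : ℚ_[p]))
        = (((a + ((p + 1) / 2 : ℕ)) : ℤ_[p]) : ℚ_[p]) := by push_cast; ring
    have e2 : ((a : ℚ_[p]) - (((p - 1) / 2 : ℕ) : ℚ_[p]))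
        = (((a - ((p - 1) / 2 : ℕ)) : ℤ_[p]) : ℚ_[p]) := by push_cast; ring
    have e3 : ((a : ℚ_[p]) + 1) = (((a + 1) : ℤ_[p]) : ℚ_[p]) := by push_cast; ring
    have e4 : ((((p + 1) / 2 : ℕ) : ℚ_[p]))
        = ((((((p + 1) / 2 : ℕ)) : ℤ_[p])) : ℚ_[p]) := by push_cast; ring
    have e5 : (-(((p - 1) / 2 : ℕ) : ℚ_[p]))
        = (((-(((p - 1) / 2 : ℕ) : ℤ_[p])) : ℤ_[p]) : ℚ_[p]) := by push_cast; ring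
    have e6 : ((k.factorial : ℚ_[p])) = (((k.factorial : ℤ_[p])) : ℚ_[p]) := by push_cast; ring
    have e7 : (((p - 1).factorial : ℚ_[p])) = ((((p - 1).factorial : ℤ_[p])) : ℚ_[p]) := by
      push_cast; ring
    rw [e1, e2, e3, e4, e5, e6, e7, ← poch_coe, ← poch_coe, ← poch_coe, ← poch_coe, ← poch_coe,
      ← poch_coe]
    -- nonvanishing of denominators
    have hB0 : ((poch (a + 1) k : ℤ_[p]) : ℚ_[p]) ≠ 0 :=
      PadicInt.coe_ne_zero.mpr (hpochunit k (by omega)).ne_zero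
    have hD0 : (((k.factorial : ℤ_[p])) : ℚ_[p]) ≠ 0 :=
      PadicInt.coe_ne_zero.mpr (hfacunit k hk).ne_zero
    have hF0 : ((poch (a + 1) ((p - 1) / 2) : ℤ_[p]) : ℚ_[p]) ≠ 0 :=
      PadicInt.coe_ne_zero.mpr (hpochunit _ (by omega : (p - 1) / 2 ≤ p - 1)).ne_zero
    -- key equalities in ℚ_p
    have hNQ : ((poch (a + ((p + 1) / 2 : ℕ)) k : ℤ_[p]) : ℚ_[p]) ^ 2 *
          ((poch (a - ((p - 1) / 2 : ℕ)) k : ℤ_[p]) : ℚ_[p]) ^ 2 *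
          ((poch (a + 1) ((p - 1) / 2) : ℤ_[p]) : ℚ_[p]) ^ 4 *
          (((k.factorial : ℤ_[p])) : ℚ_[p]) ^ 4
        - ((poch ((((p + 1) / 2 : ℕ)) : ℤ_[p]) k : ℤ_[p]) : ℚ_[p]) ^ 2 *
            ((poch (-(((p - 1) / 2 : ℕ) : ℤ_[p])) k : ℤ_[p]) : ℚ_[p]) ^ 2 *
            ((((p - 1).factorial : ℤ_[p])) : ℚ_[p]) ^ 2 *
            ((poch (a + 1) k : ℤ_[p]) : ℚ_[p]) ^ 4
        = (p : ℚ_[p]) * (w : ℚ_[p]) := by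
      have := congrArg (fun x : ℤ_[p] => (x : ℚ_[p])) hw
      push_cast [hNdef] at this ⊢
      linear_combination this
    have hU : ((poch (a + 1) k : ℤ_[p]) : ℚ_[p]) ^ 4 *
          ((poch (a + 1) ((p - 1) / 2) : ℤ_[p]) : ℚ_[p]) ^ 4 *
          (((k.factorial : ℤ_[p])) : ℚ_[p]) ^ 4 * (((↑u⁻¹ : ℤ_[p])) : ℚ_[p]) = 1 := by
      have h1 : ((↑u : ℤ_[p]) * (↑u⁻¹ : ℤ_[p])) = 1 := u.mul_inv
      have h2 : (↑u : ℤ_[p]) = poch (a + 1) k ^ 4 * poch (a + 1) ((p - 1) / 2) ^ 4 *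
          (k.factorial : ℤ_[p]) ^ 4 := by
        rw [hudef]
        push_cast
        rw [hBu.unit_spec, hFu.unit_spec, hDu.unit_spec]
      rw [h2] at h1
      have := congrArg (fun x : ℤ_[p] => (x : ℚ_[p])) h1
      push_cast at this ⊢
      linear_combination this
    have hB4 : ((poch (a + 1) k : ℤ_[p]) : ℚ_[p]) ^ 4 ≠ 0 := pow_ne_zero _ hB0
    have hD4 : (((k.factorial : ℤ_[p])) : ℚ_[p]) ^ 4 ≠ 0 := pow_ne_zero _ hD0
    have hF4 : ((poch (a + 1) ((p - 1) / 2) : ℤ_[p]) : ℚ_[p]) ^ 4 ≠ 0 := pow_ne_zero _ hF0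
    rw [div_mul_div_comm, div_sub_div _ _ hB4 (mul_ne_zero hF4 hD4),
      div_eq_iff (mul_ne_zero hB4 (mul_ne_zero hF4 hD4)), PadicInt.coe_mul]
    linear_combination hNQ - ((p : ℚ_[p]) * (w : ℚ_[p])) * hU
  choose z hz using key
  refine ⟨∑ k ∈ Finset.range p, z k, ?_⟩
  rw [Finset.mul_sum, ← Finset.sum_sub_distrib,
    Finset.sum_congr rfl (fun k hk => hz k (Finset.mem_range.mp hk)), ← Finset.mul_sum]
  congr 1
  exact (map_sum (PadicInt.Coe.ringHom) z (Finset.range p)).symm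
end

section
/- Let n ≥ 3 be an odd integer, let ζ ∈ ℂ be a primitive n-th root of unity, and let a ∈ ℂ satisfy a ζ^j ≠ 1 and a ≠ ζ^j for all j = 1, ..., n-1. Then F_n(a; ζ) = [a^{n-1} ∏_{j=1}^{n-1} (ζ^j − 1)^2] / [∏_{j=1}^{(n-1)/2} (1 − a ζ^j)^2 · ∏_{j=(n+1)/2}^{n-1} (a − ζ^j)^2] · F_n(1; ζ). -/
open Finset Complex

/-- The `q`-Pochhammer symbol `(x; q)_k = ∏_{j=0}^{k-1} (1 − x q^j)`. -/
def qPoch (x q : ℂ) (k : ℕ) : ℂ :=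
  ∏ j ∈ Finset.range k, (1 - x * q ^ j)

/-- For odd `n ≥ 3` and `q ≠ 0`,
`F_n(a; q) = Σ_{k=0}^{n-1} (a q^{(n+1)/2}; q)_k^2 (a q^{(−n+1)/2}; q)_k^2 / (a q; q)_k^4 · q^k`,
where `q^{(−n+1)/2} = (q⁻¹)^{(n-1)/2}`. -/
noncomputable def Fq (n : ℕ) (a q : ℂ) : ℂ :=
  ∑ k ∈ Finset.range n,
    qPoch (a * q ^ ((n + 1) / 2)) q k ^ 2 * qPoch (a * (q⁻¹) ^ ((n - 1) / 2)) q k ^ 2 /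
      qPoch (a * q) q k ^ 4 * q ^ k

private lemma keyProd (ζ a : ℂ) (m k : ℕ) (hm : 1 ≤ m) :
    (∏ j ∈ Finset.range k, (1 - a * ζ ^ m * ζ ^ j)) * ∏ j ∈ Finset.Ico 1 m, (1 - a * ζ ^ j)
      = (∏ j ∈ Finset.range k, (1 - a * ζ * ζ ^ j)) *
        ∏ j ∈ Finset.Ico 1 m, (1 - ζ ^ (k + j) * a) := by
  have e1 : ∏ j ∈ Finset.range k, (1 - a * ζ ^ m * ζ ^ j)
      = ∏ j ∈ Finset.Ico m (m + k), (1 - a * ζ ^ j) := by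
    rw [Finset.prod_Ico_eq_prod_range, Nat.add_sub_cancel_left]
    exact Finset.prod_congr rfl fun j _ => by rw [pow_add, mul_assoc]
  have e2 : ∏ j ∈ Finset.range k, (1 - a * ζ * ζ ^ j)
      = ∏ j ∈ Finset.Ico 1 (k + 1), (1 - a * ζ ^ j) := by
    rw [Finset.prod_Ico_eq_prod_range, Nat.add_sub_cancel]
    exact Finset.prod_congr rfl fun j _ => by rw [pow_add, pow_one, mul_assoc]
  have e3 : ∏ j ∈ Finset.Ico 1 m, (1 - ζ ^ (k + j) * a)
      = ∏ j ∈ Finset.Ico (k + 1) (k + m), (1 - a * ζ ^ j) := by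
    rw [Finset.prod_Ico_eq_prod_range, Finset.prod_Ico_eq_prod_range]
    have hcard : k + m - (k + 1) = m - 1 := by omega
    rw [hcard]
    refine Finset.prod_congr rfl fun j _ => ?_
    rw [show k + 1 + j = k + (1 + j) from by omega, mul_comm]
  rw [e1, e2, e3, mul_comm]
  rw [Finset.prod_Ico_consecutive _ hm (Nat.le_add_right m k)]
  rw [Finset.prod_Ico_consecutive _ (by omega : 1 ≤ k + 1) (by omega : k + 1 ≤ k + m)]
  rw [show m + k = k + m from by omega]

private noncomputable def GP (ζ : ℂ) (n m : ℕ) : Polynomial ℂ :=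
  ∑ k ∈ Finset.range n, Polynomial.C (ζ ^ k) *
    ∏ j ∈ Finset.Ico 1 m, (1 - Polynomial.C (ζ ^ (k + j)) * Polynomial.X) ^ 4

private lemma GP_eval (ζ : ℂ) (n m : ℕ) (b : ℂ) :
    (GP ζ n m).eval b = ∑ k ∈ Finset.range n, ζ ^ k *
      (∏ j ∈ Finset.Ico 1 m, (1 - ζ ^ (k + j) * b)) ^ 4 := by
  rw [GP, Polynomial.eval_finset_sum]
  refine Finset.sum_congr rfl fun k _ => ?_
  rw [← Finset.prod_pow]
  simp [Polynomial.eval_prod]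

private lemma coeff_comp_C_mul_X (p : Polynomial ℂ) (c : ℂ) (i : ℕ) :
    (p.comp (Polynomial.C c * Polynomial.X)).coeff i = c ^ i * p.coeff i := by
  induction p using Polynomial.induction_on' with
  | add p q hp hq => simp [Polynomial.add_comp, hp, hq, mul_add]
  | monomial k a =>
    rw [Polynomial.monomial_comp, mul_pow, ← Polynomial.C_pow, ← mul_assoc, ← Polynomial.C_mul,
      Polynomial.coeff_C_mul, Polynomial.coeff_X_pow, Polynomial.coeff_monomial]
    by_cases h : i = k
    · subst h; simp; ring
    · rw [if_neg h, if_neg fun hh => h hh.symm]; ring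

private lemma GP_comp (ζ : ℂ) (n m : ℕ) (hn : 1 ≤ n) (hζn : ζ ^ n = 1) :
    (GP ζ n m).comp (Polynomial.C ζ * Polynomial.X)
      = Polynomial.C (ζ ^ (n - 1)) * GP ζ n m := by
  classical
  set h : ℕ → Polynomial ℂ := fun k => Polynomial.C (ζ ^ k) *
    ∏ j ∈ Finset.Ico 1 m, (1 - Polynomial.C (ζ ^ (k + j)) * Polynomial.X) ^ 4 with hh
  have hcomp : (GP ζ n m).comp (Polynomial.C ζ * Polynomial.X)
      = ∑ k ∈ Finset.range n, Polynomial.C (ζ ^ (n - 1)) * h (k + 1) := by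
    have hms := map_sum (Polynomial.compRingHom (Polynomial.C ζ * Polynomial.X))
      (fun k => Polynomial.C (ζ ^ k) *
        ∏ j ∈ Finset.Ico 1 m, (1 - Polynomial.C (ζ ^ (k + j)) * Polynomial.X) ^ 4)
      (Finset.range n)
    simp only [Polynomial.coe_compRingHom_apply] at hms
    rw [GP, hms]
    refine Finset.sum_congr rfl fun k _ => ?_
    rw [Polynomial.mul_comp, Polynomial.C_comp, Polynomial.prod_comp]
    rw [hh]
    simp only [Polynomial.pow_comp, Polynomial.sub_comp, Polynomial.one_comp,
      Polynomial.mul_comp, Polynomial.C_comp, Polynomial.X_comp]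
    rw [← mul_assoc, ← Polynomial.C_mul]
    have hc : ζ ^ (n - 1) * (ζ ^ (k + 1)) = ζ ^ k := by
      rw [← pow_add, show n - 1 + (k + 1) = n + k from by omega, pow_add, hζn, one_mul]
    rw [hc]
    refine congrArg _ (Finset.prod_congr rfl fun j _ => ?_)
    rw [← mul_assoc, ← Polynomial.C_mul, ← pow_succ, show k + j + 1 = k + 1 + j from by omega]
  rw [hcomp, ← Finset.mul_sum]
  have hper : h n = h 0 := by
    rw [hh]
    simp only [pow_zero, zero_add]
    rw [hζn]
    refine congrArg _ (Finset.prod_congr rfl fun j _ => ?_)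
    rw [show n + j = j + n from by omega, pow_add, hζn, mul_one]
  have hshift : ∑ k ∈ Finset.range n, h (k + 1) = ∑ k ∈ Finset.range n, h k := by
    have h1 : ∑ k ∈ Finset.range (n + 1), h k
        = (∑ k ∈ Finset.range n, h (k + 1)) + h 0 := Finset.sum_range_succ' h n
    have h2 : ∑ k ∈ Finset.range (n + 1), h k
        = (∑ k ∈ Finset.range n, h k) + h n := Finset.sum_range_succ h n
    rw [h1, hper] at h2
    exact add_right_cancel h2
  rw [hshift, GP]

private lemma GP_deg (ζ : ℂ) (n m : ℕ) : (GP ζ n m).natDegree ≤ 4 * (m - 1) := by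
  refine Polynomial.natDegree_sum_le_of_forall_le _ _ fun k _ => ?_
  refine le_trans (Polynomial.natDegree_C_mul_le _ _) ?_
  refine le_trans (Polynomial.natDegree_prod_le _ _) ?_
  have hle : ∀ j ∈ Finset.Ico 1 m,
      ((1 - Polynomial.C (ζ ^ (k + j)) * Polynomial.X) ^ 4).natDegree ≤ 4 := by
    intro j _
    refine le_trans (Polynomial.natDegree_pow_le) ?_
    have : ((1 : Polynomial ℂ) - Polynomial.C (ζ ^ (k + j)) * Polynomial.X).natDegree ≤ 1 := by
      refine le_trans (Polynomial.natDegree_sub_le _ _) ?_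
      simp only [Polynomial.natDegree_one, max_le_iff]
      exact ⟨Nat.zero_le _, le_trans (Polynomial.natDegree_C_mul_le _ _)
        Polynomial.natDegree_X_le⟩
    omega
  refine le_trans (Finset.sum_le_sum hle) ?_
  rw [Finset.sum_const, Nat.card_Ico, smul_eq_mul]
  omega

private lemma GP_structure (ζ : ℂ) (n m : ℕ) (hn3 : 3 ≤ n) (hnm : n = 2 * m - 1)
    (hζ : IsPrimitiveRoot ζ n) :
    GP ζ n m = Polynomial.C ((GP ζ n m).coeff (n - 1)) * Polynomial.X ^ (n - 1) := by
  ext i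
  rw [Polynomial.coeff_C_mul, Polynomial.coeff_X_pow]
  by_cases hi : i = n - 1
  · rw [if_pos hi, hi, mul_one]
  · rw [if_neg hi, mul_zero]
    by_cases hbig : 4 * (m - 1) < i
    · exact Polynomial.coeff_eq_zero_of_natDegree_lt (lt_of_le_of_lt (GP_deg ζ n m) hbig)
    · push_neg at hbig
      have hfe := GP_comp ζ n m (by omega) hζ.pow_eq_one
      have h1 : ζ ^ i * (GP ζ n m).coeff i = ζ ^ (n - 1) * (GP ζ n m).coeff i := by
        have h2 : ((GP ζ n m).comp (Polynomial.C ζ * Polynomial.X)).coeff i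
            = (Polynomial.C (ζ ^ (n - 1)) * GP ζ n m).coeff i := by rw [hfe]
        rwa [coeff_comp_C_mul_X, Polynomial.coeff_C_mul] at h2
      have hne : ζ ^ i ≠ ζ ^ (n - 1) := by
        intro hcontra
        have hmod : ζ ^ i = ζ ^ (i % n) := by
          conv_lhs => rw [← Nat.div_add_mod i n]
          rw [pow_add, pow_mul, hζ.pow_eq_one, one_pow, one_mul]
        have himn : i % n < n := Nat.mod_lt _ (by omega)
        have heq : i % n = n - 1 := hζ.pow_inj himn (by omega) (hmod.symm.trans hcontra)
        rcases lt_or_ge i n with hlt | hge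
        · rw [Nat.mod_eq_of_lt hlt] at heq; omega
        · rw [Nat.mod_eq_sub_mod hge, Nat.mod_eq_of_lt (by omega)] at heq; omega
      have : (ζ ^ i - ζ ^ (n - 1)) * (GP ζ n m).coeff i = 0 := by linear_combination h1
      exact (mul_eq_zero.mp this).resolve_left (sub_ne_zero.mpr hne)

theorem F_eval_at_root_of_unity (n : ℕ) (hn3 : 3 ≤ n) (hodd : Odd n)
    (ζ : ℂ) (hζ : IsPrimitiveRoot ζ n) (a : ℂ)
    (ha : ∀ j ∈ Finset.Icc 1 (n - 1), a * ζ ^ j ≠ 1 ∧ a ≠ ζ ^ j) :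
    Fq n a ζ =
      a ^ (n - 1) * (∏ j ∈ Finset.Icc 1 (n - 1), (ζ ^ j - 1) ^ 2) /
        ((∏ j ∈ Finset.Icc 1 ((n - 1) / 2), (1 - a * ζ ^ j) ^ 2) *
          ∏ j ∈ Finset.Icc ((n + 1) / 2) (n - 1), (a - ζ ^ j) ^ 2) *
      Fq n 1 ζ := by
  obtain ⟨r, hr⟩ := hodd
  set m := r + 1 with hmdef
  have hm2 : 2 ≤ m := by omega
  have hnm : n = 2 * m - 1 := by omega
  have hn2 : (n + 1) / 2 = m := by omega
  have hn1 : (n - 1) / 2 = m - 1 := by omega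
  have hζn : ζ ^ n = 1 := hζ.pow_eq_one
  have hζ0 : ζ ≠ 0 := by
    intro h
    rw [h, zero_pow (by omega : n ≠ 0)] at hζn
    exact zero_ne_one hζn
  have hinv : (ζ⁻¹) ^ ((n - 1) / 2) = ζ ^ ((n + 1) / 2) := by
    rw [hn1, hn2, inv_pow]
    refine inv_eq_of_mul_eq_one_right ?_
    rw [← pow_add, show m - 1 + m = n from by omega, hζn]
  have hkey : ∀ b : ℂ, (∀ j ∈ Finset.Icc 1 (n - 1), b * ζ ^ j ≠ 1) →
      Fq n b ζ * (∏ j ∈ Finset.Ico 1 m, (1 - b * ζ ^ j)) ^ 4 = (GP ζ n m).eval b := by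
    intro b hb
    rw [Fq, GP_eval, Finset.sum_mul]
    refine Finset.sum_congr rfl fun k hk => ?_
    rw [hinv, hn2]
    have hk' : k < n := Finset.mem_range.mp hk
    have hdk : qPoch (b * ζ) ζ k ≠ 0 := by
      rw [qPoch]
      refine Finset.prod_ne_zero_iff.mpr fun j hj => ?_
      have hj' : j < k := Finset.mem_range.mp hj
      refine sub_ne_zero.mpr (Ne.symm ?_)
      intro hcontra
      have hb1 : b * ζ ^ (j + 1) = 1 := by
        rw [pow_succ]; linear_combination hcontra
      exact hb (j + 1) (Finset.mem_Icc.mpr ⟨by omega, by omega⟩) hb1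
    have hNd := keyProd ζ b m k (by omega)
    have hN : qPoch (b * ζ ^ m) ζ k = ∏ j ∈ Finset.range k, (1 - b * ζ ^ m * ζ ^ j) := rfl
    have hd : qPoch (b * ζ) ζ k = ∏ j ∈ Finset.range k, (1 - b * ζ * ζ ^ j) := rfl
    rw [← hN, ← hd] at hNd
    have h4 : qPoch (b * ζ) ζ k ^ 4 ≠ 0 := pow_ne_zero _ hdk
    rw [div_mul_eq_mul_div, div_mul_eq_mul_div, div_eq_iff h4]
    linear_combination (ζ ^ k *
      ((qPoch (b * ζ ^ m) ζ k * ∏ j ∈ Finset.Ico 1 m, (1 - b * ζ ^ j)) ^ 3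
      + (qPoch (b * ζ ^ m) ζ k * ∏ j ∈ Finset.Ico 1 m, (1 - b * ζ ^ j)) ^ 2 *
          (qPoch (b * ζ) ζ k * ∏ j ∈ Finset.Ico 1 m, (1 - ζ ^ (k + j) * b))
      + (qPoch (b * ζ ^ m) ζ k * ∏ j ∈ Finset.Ico 1 m, (1 - b * ζ ^ j)) *
          (qPoch (b * ζ) ζ k * ∏ j ∈ Finset.Ico 1 m, (1 - ζ ^ (k + j) * b)) ^ 2
      + (qPoch (b * ζ) ζ k * ∏ j ∈ Finset.Ico 1 m, (1 - ζ ^ (k + j) * b)) ^ 3)) * hNd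
  set g := (GP ζ n m).coeff (n - 1) with hg
  have hGP := GP_structure ζ n m hn3 hnm hζ
  have hFb : ∀ b : ℂ, (∀ j ∈ Finset.Icc 1 (n - 1), b * ζ ^ j ≠ 1) →
      Fq n b ζ * (∏ j ∈ Finset.Ico 1 m, (1 - b * ζ ^ j)) ^ 4 = g * b ^ (n - 1) := by
    intro b hb
    rw [hkey b hb, hGP]
    simp [hg]
  have hLw : ∀ b : ℂ,
      (∏ j ∈ Finset.Icc 1 (m - 1), (1 - b * ζ ^ j) ^ 2) *
        (∏ j ∈ Finset.Icc m (n - 1), (b - ζ ^ j) ^ 2) *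
        (∏ j ∈ Finset.Ico 1 m, (ζ ^ j) ^ 2)
      = (∏ j ∈ Finset.Ico 1 m, (1 - b * ζ ^ j)) ^ 4 := by
    intro b
    have hIcc1 : Finset.Icc 1 (m - 1) = Finset.Ico 1 m := by
      rw [← Finset.Ico_add_one_right_eq_Icc]; congr 1 <;> omega
    have hIcc2 : Finset.Icc m (n - 1) = Finset.Ico m n := by
      rw [← Finset.Ico_add_one_right_eq_Icc]; congr 1 <;> omega
    have hre : ∏ j ∈ Finset.Ico m n, (b - ζ ^ j) ^ 2
        = ∏ j ∈ Finset.Ico 1 m, (b - ζ ^ (n - j)) ^ 2 := by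
      refine Finset.prod_nbij' (fun j => n - j) (fun j => n - j) ?_ ?_ ?_ ?_ ?_
      · intro x hx; simp only [Finset.mem_Ico] at *; omega
      · intro x hx; simp only [Finset.mem_Ico] at *; omega
      · intro x hx; simp only [Finset.mem_Ico] at hx; show n - (n - x) = x; omega
      · intro x hx; simp only [Finset.mem_Ico] at hx; show n - (n - x) = x; omega
      · intro x hx; simp only [Finset.mem_Ico] at hx
        show (b - ζ ^ x) ^ 2 = (b - ζ ^ (n - (n - x))) ^ 2
        have hxx : n - (n - x) = x := by omega
        rw [hxx]
    rw [hIcc1, hIcc2, hre, ← Finset.prod_mul_distrib, ← Finset.prod_mul_distrib,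
      ← Finset.prod_pow]
    refine Finset.prod_congr rfl fun j hj => ?_
    rw [Finset.mem_Ico] at hj
    have hy : ζ ^ (n - j) * ζ ^ j = 1 := by
      rw [← pow_add, show n - j + j = n from by omega, hζn]
    calc (1 - b * ζ ^ j) ^ 2 * (b - ζ ^ (n - j)) ^ 2 * (ζ ^ j) ^ 2
        = (1 - b * ζ ^ j) ^ 2 * ((b - ζ ^ (n - j)) * ζ ^ j) ^ 2 := by ring
      _ = (1 - b * ζ ^ j) ^ 2 * (b * ζ ^ j - ζ ^ (n - j) * ζ ^ j) ^ 2 := by rw [sub_mul]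
      _ = (1 - b * ζ ^ j) ^ 2 * (b * ζ ^ j - 1) ^ 2 := by rw [hy]
      _ = (1 - b * ζ ^ j) ^ 4 := by ring
  have hPi1 : (∏ j ∈ Finset.Icc 1 (n - 1), (ζ ^ j - 1) ^ 2)
      = (∏ j ∈ Finset.Icc 1 (m - 1), (1 - 1 * ζ ^ j) ^ 2) *
        ∏ j ∈ Finset.Icc m (n - 1), ((1 : ℂ) - ζ ^ j) ^ 2 := by
    have h0 : Finset.Icc 1 (n - 1) = Finset.Ico 1 n := by
      rw [← Finset.Ico_add_one_right_eq_Icc]; congr 1 <;> omega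
    have hIcc1 : Finset.Icc 1 (m - 1) = Finset.Ico 1 m := by
      rw [← Finset.Ico_add_one_right_eq_Icc]; congr 1 <;> omega
    have hIcc2 : Finset.Icc m (n - 1) = Finset.Ico m n := by
      rw [← Finset.Ico_add_one_right_eq_Icc]; congr 1 <;> omega
    rw [h0, hIcc1, hIcc2,
      ← Finset.prod_Ico_consecutive (fun j => (ζ ^ j - 1) ^ 2) (by omega : 1 ≤ m)
        (by omega : m ≤ n)]
    congr 1
    · exact Finset.prod_congr rfl fun j _ => by ring
    · exact Finset.prod_congr rfl fun j _ => by ring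
  rw [hn1, hn2]
  have hsub : ∀ j ∈ Finset.Icc 1 (m - 1), j ∈ Finset.Icc 1 (n - 1) := by
    intro j hj; rw [Finset.mem_Icc] at *; omega
  have hsub2 : ∀ j ∈ Finset.Icc m (n - 1), j ∈ Finset.Icc 1 (n - 1) := by
    intro j hj; rw [Finset.mem_Icc] at *; omega
  have hPi2 : (∏ j ∈ Finset.Icc 1 (m - 1), (1 - a * ζ ^ j) ^ 2) ≠ 0 :=
    Finset.prod_ne_zero_iff.mpr fun j hj => pow_ne_zero _
      (sub_ne_zero.mpr fun h => (ha j (hsub j hj)).1 h.symm)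
  have hPi3 : (∏ j ∈ Finset.Icc m (n - 1), (a - ζ ^ j) ^ 2) ≠ 0 :=
    Finset.prod_ne_zero_iff.mpr fun j hj => pow_ne_zero _
      (sub_ne_zero.mpr (ha j (hsub2 j hj)).2)
  have hw0 : (∏ j ∈ Finset.Ico 1 m, (ζ ^ j) ^ 2) ≠ 0 :=
    Finset.prod_ne_zero_iff.mpr fun j _ => pow_ne_zero _ (pow_ne_zero _ hζ0)
  rw [div_mul_eq_mul_div, eq_div_iff (mul_ne_zero hPi2 hPi3)]
  refine mul_right_cancel₀ hw0 ?_
  have hFa := hFb a (fun j hj => (ha j hj).1)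
  have hF1 := hFb 1 (fun j hj => by
    rw [Finset.mem_Icc] at hj
    rw [one_mul]
    exact hζ.pow_ne_one_of_pos_of_lt (by omega) (by omega))
  have hLa := hLw a
  have hL1 := hLw 1
  linear_combination (Fq n a ζ) * hLa + hFa - a ^ (n - 1) * (Fq n 1 ζ) * hL1
    - a ^ (n - 1) * hF1
    - a ^ (n - 1) * (Fq n 1 ζ) * (∏ j ∈ Finset.Ico 1 m, (ζ ^ j) ^ 2) * hPi1
end

section
/- Let c(n) denote the n-th coefficient of the formal power series X · ∏_{m=1}^∞ (1 − X^{3m})^8 over ℤ. Then c(p) = 0 for every prime p with p ≡ 2 (mod 3). -/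
open Finset

/-- A power series is supported on multiples of 3. -/
def Supp3 (f : PowerSeries ℤ) : Prop :=
  ∀ k : ℕ, ¬ (3 ∣ k) → PowerSeries.coeff (R := ℤ) k f = 0

lemma Supp3.one : Supp3 1 := by
  intro k hk
  rw [PowerSeries.coeff_one]
  have h0 : ¬ k = 0 := fun h => hk (h ▸ dvd_zero 3)
  simp [h0]

lemma Supp3.mul {f g : PowerSeries ℤ} (hf : Supp3 f) (hg : Supp3 g) :
    Supp3 (f * g) := by
  intro k hk
  rw [PowerSeries.coeff_mul]
  apply Finset.sum_eq_zero
  rintro ⟨i, j⟩ hij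
  replace hij : i + j = k := Finset.HasAntidiagonal.mem_antidiagonal.mp hij
  by_cases hi : 3 ∣ i
  · have hj : ¬ 3 ∣ j := fun h => hk (hij ▸ dvd_add hi h)
    rw [hg j hj, mul_zero]
  · rw [hf i hi, zero_mul]

lemma Supp3.pow {f : PowerSeries ℤ} (hf : Supp3 f) (n : ℕ) : Supp3 (f ^ n) := by
  induction n with
  | zero => simpa using Supp3.one
  | succ n ih => rw [pow_succ]; exact ih.mul hf

lemma Supp3.factor (m : ℕ) : Supp3 (1 - PowerSeries.X ^ (3 * m) : PowerSeries ℤ) := by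
  intro k hk
  rw [map_sub, PowerSeries.coeff_one, PowerSeries.coeff_X_pow]
  have h0 : ¬ k = 0 := fun h => hk (h ▸ dvd_zero 3)
  have h1 : ¬ k = 3 * m := fun h => hk (h ▸ Dvd.intro m rfl)
  simp [h0, h1]

/-- `c n` is the `n`-th coefficient of the formal power series
`X * ∏_{m=1}^∞ (1 − X^{3m})^8` over `ℤ` (the `q`-expansion of the CM newform
`η(3τ)^8`); since the factors with `3m > n` do not affect the coefficient of `X^n`,
we may truncate the infinite product at `m = n`. -/
noncomputable def c (n : ℕ) : ℤ :=
  PowerSeries.coeff (R := ℤ) n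
    (PowerSeries.X * ∏ m ∈ Finset.Icc 1 n, (1 - PowerSeries.X ^ (3 * m)) ^ 8)

theorem eta3_pow8_coeff_vanishes (p : ℕ) (hp : p.Prime) (hmod : p % 3 = 2) :
    c p = 0 := by
  have hprod : Supp3 (∏ m ∈ Finset.Icc 1 p, (1 - PowerSeries.X ^ (3 * m)) ^ 8) := by
    apply Finset.prod_induction _ Supp3 (fun _ _ => Supp3.mul) Supp3.one
    intro m _
    exact (Supp3.factor m).pow 8
  have hp1 : p = (p - 1) + 1 := (Nat.succ_pred_eq_of_pos hp.pos).symm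
  rw [c]
  set F := ∏ m ∈ Finset.Icc 1 p, (1 - PowerSeries.X ^ (3 * m) : PowerSeries ℤ) ^ 8 with hF
  conv_lhs => rw [hp1]
  rw [PowerSeries.coeff_succ_X_mul]
  apply hprod
  have hpos := hp.two_le
  omega
end
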